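/- Let G = ℤ/2 × ℤ/2 act trivially on ℤ/2. Then Ш²_ω(G, ℤ/2) := ⋂_{g∈G} Ker[H²(G, ℤ/2) → H²(⟨g⟩, ℤ/2)] is the trivial group. -/

import Mathlib

set_option maxHeartbeats 1000000


open groupCohomology

section Helper

variable {k G G' : Type} [CommRing k] [Group G] [Group G']

/-- Restriction of a representation along a group homomorphism. -/
noncomputable def resRep (φ : G' →* G) (A : Rep k G) : Rep k G' := Rep.of (A.ρ.comp φ)

/-- The old (Mathlib, Dec 2024) `groupCohomology.H2 A`: `Z²(G, A) ⧸ B²(G, A)`. -/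
abbrev H2quot (A : Rep k G) : Type :=
  cocycles₂ A ⧸ (coboundaries₂ A).comap (cocycles₂ A).subtype

/-- Restriction of 2-cocycles along a group homomorphism. -/
noncomputable def resTwoCocycles (φ : G' →* G) (A : Rep k G) :
    cocycles₂ A →ₗ[k] cocycles₂ (resRep φ A) where
  toFun f := ⟨fun p => f.1 (φ p.1, φ p.2), by
      refine (mem_cocycles₂_iff (A := resRep φ A) (fun p => f.1 (φ p.1, φ p.2))).2 ?_
      intro g h j
      have := (mem_cocycles₂_iff (A := A) f.1).1 f.2 (φ g) (φ h) (φ j)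
      simp only [map_mul] at this ⊢
      exact this⟩
  map_add' f g := rfl
  map_smul' r f := rfl

/-- The restriction map on second group cohomology along a group homomorphism. -/
noncomputable def resH2 (φ : G' →* G) (A : Rep k G) :
    H2quot A →ₗ[k] H2quot (resRep φ A) :=
  Submodule.mapQ _ _ (resTwoCocycles φ A) (by
    intro f hf
    simp only [Submodule.mem_comap] at hf ⊢
    obtain ⟨x, hx⟩ := hf
    refine ⟨fun g' => x (φ g'), funext fun p => ?_⟩
    have := congrFun hx (φ p.1, φ p.2)
    simp only [d₁₂_hom_apply] at this
    change A.ρ (φ p.1) (x (φ p.2)) - x (φ (p.1 * p.2)) + x (φ p.1) = f.1 (φ p.1, φ p.2)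
    rw [map_mul]
    exact this)

theorem mem_twoCoboundaries_iff {A : Rep k G} (f : cocycles₂ A) :
    f ∈ (coboundaries₂ A).comap (cocycles₂ A).subtype ↔
      ∃ x : G → A, ∀ g h : G, A.ρ g (x h) - x (g * h) + x g = f (g, h) := by
  rw [Submodule.mem_comap, coboundaries₂, LinearMap.mem_range]
  constructor
  · rintro ⟨x, hx⟩
    exact ⟨x, fun g h => by
      have := congrFun hx (g, h)
      rw [d₁₂_hom_apply] at this
      exact this⟩
  · rintro ⟨x, hx⟩
    exact ⟨x, funext fun p => by
      rw [d₁₂_hom_apply]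
      exact hx p.1 p.2⟩

/-- `Ш²_ω(G, A)`: classes in `H²(G, A)` restricting to `0` on every cyclic subgroup. -/
noncomputable def Sha2 (A : Rep k G) : Submodule k (H2quot A) :=
  ⨅ g : G, LinearMap.ker (resH2 (Subgroup.zpowers g).subtype A)

end Helper

/-- Let `G = ℤ/2 × ℤ/2` act trivially on `ℤ/2`. Then
`Ш²_ω(G, ℤ/2) = ⋂_{g∈G} Ker[H²(G, ℤ/2) → H²(⟨g⟩, ℤ/2)]` is trivial. -/
theorem sha2_omega_klein_zmod2 :
    Sha2 (Rep.trivial ℤ (Multiplicative (ZMod 2 × ZMod 2)) (ZMod 2)) = ⊥ := by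
  set G := Multiplicative (ZMod 2 × ZMod 2)
  set A : Rep ℤ G := Rep.trivial ℤ G (ZMod 2) with hA
  rw [eq_bot_iff]
  intro z hz
  obtain ⟨f, rfl⟩ := Submodule.Quotient.mk_surjective _ z
  simp only [Sha2, Submodule.mem_iInf, LinearMap.mem_ker] at hz
  rw [Submodule.mem_bot]
  have hsqG : ∀ u : G, u * u = 1 := by decide
  have hdiag : ∀ g : G, f.1 (g, g) = f.1 (1, 1) := by
    intro g
    have hg := hz g
    rw [resH2, Submodule.mapQ_apply, Submodule.Quotient.mk_eq_zero,
      mem_twoCoboundaries_iff] at hg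
    obtain ⟨x, hx⟩ := hg
    set gg : (Subgroup.zpowers g) := ⟨g, Subgroup.mem_zpowers g⟩ with hgg
    have hsq : gg * gg = 1 := Subtype.ext (hsqG g)
    have h1 : x gg - x 1 + x gg = f.1 (g, g) := by
      have := hx gg gg; rw [hsq] at this; exact this
    have h2 : x 1 - x 1 + x 1 = f.1 (1, 1) := by
      have := hx 1 1; rw [mul_one] at this; exact this
    rw [← h1, ← h2]
    have z2 : ∀ t u : ZMod 2, t - u + t = u - u + u := by decide
    exact z2 _ _
  set a : G := Multiplicative.ofAdd ((1 : ZMod 2), (0 : ZMod 2)) with ha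
  set b : G := Multiplicative.ofAdd ((0 : ZMod 2), (1 : ZMod 2)) with hb
  set c : G := Multiplicative.ofAdd ((1 : ZMod 2), (1 : ZMod 2)) with hc
  have hρ : ∀ (u : G) (v : ZMod 2), A.ρ u v = v := fun _ _ => rfl
  have hcoc : ∀ g h j : G, f.1 (g * h, j) + f.1 (g, h) = f.1 (h, j) + f.1 (g, h * j) := by
    intro g h j
    have := (mem_cocycles₂_iff (A := A) f.1).1 f.2 g h j
    simpa [hρ] using this
  have h1st : ∀ v : G, f.1 (1, v) = f.1 (1, 1) := fun v => cocycles₂_map_one_fst f v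
  have h2nd : ∀ u : G, f.1 (u, 1) = f.1 (1, 1) := by
    intro u
    simpa [hρ] using cocycles₂_map_one_snd f u
  have mab : a * b = c := by rw [ha, hb, hc]; decide
  have mba : b * a = c := by rw [ha, hb, hc]; decide
  have mac : a * c = b := by rw [ha, hb, hc]; decide
  have mca : c * a = b := by rw [ha, hb, hc]; decide
  have mbc : b * c = a := by rw [ha, hb, hc]; decide
  have mcb : c * b = a := by rw [ha, hb, hc]; decide
  have zsolve : ∀ t u w : ZMod 2, u + u = t + w → w = t := by decide
  have zsolve2 : ∀ t u w : ZMod 2, u + t = w + u → w = t := by decide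
  -- the six off-diagonal values agree
  have Tac : f.1 (a, c) = f.1 (a, b) := by
    have h := hcoc a a b
    rw [hsqG a, mab, h1st b, hdiag a] at h
    exact zsolve _ _ _ h
  have zsolve3 : ∀ t u w : ZMod 2, w + t = u + u → w = t := by decide
  have Tcb : f.1 (c, b) = f.1 (a, b) := by
    have h := hcoc a b b
    rw [mab, hsqG b, hdiag b, h2nd a] at h
    exact zsolve3 _ _ _ h
  have Tbc : f.1 (b, c) = f.1 (a, b) := by
    have h := hcoc a b c
    rw [mab, mbc, hdiag c, hdiag a] at h
    exact zsolve2 _ _ _ h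
  have Tba : f.1 (b, a) = f.1 (a, b) := by
    have h := hcoc b b c
    rw [hsqG b, mbc, h1st c, hdiag b, Tbc] at h
    exact zsolve _ _ _ h
  have Tca : f.1 (c, a) = f.1 (a, b) := by
    have h := hcoc b a a
    rw [mba, hsqG a, hdiag a, h2nd b, Tba] at h
    exact zsolve3 _ _ _ h
  -- exhibit the coboundary
  rw [Submodule.Quotient.mk_eq_zero]
  refine (mem_twoCoboundaries_iff f).2
    ⟨fun u => if u = a then f.1 (a, b) else f.1 (1, 1), ?_⟩
  have hquad : ∀ u : G, u = 1 ∨ u = a ∨ u = b ∨ u = c := by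
    rw [ha, hb, hc]; decide
  have n1a : (1 : G) ≠ a := by rw [ha]; decide
  have nba : b ≠ a := by rw [ha, hb]; decide
  have nca : c ≠ a := by rw [ha, hc]; decide
  have Z1 : ∀ t : ZMod 2, t - t + t = t := by decide
  have Z2 : ∀ s t : ZMod 2, s - s + t = t := by decide
  have Z3 : ∀ s t : ZMod 2, t - s + s = t := by decide
  have Z4 : ∀ s t : ZMod 2, s - t + s = t := by decide
  have Z5 : ∀ s t : ZMod 2, t - t + s = s := by decide
  intro g h
  rcases hquad g with rfl | rfl | rfl | rfl <;>
    rcases hquad h with rfl | rfl | rfl | rfl <;>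
    simp only [hρ, one_mul, mul_one, hsqG, mab, mba, mac, mca, mbc, mcb,
      ← cocycles₂.val_eq_coe, eq_self_iff_true, if_true,
      if_pos rfl, if_neg n1a, if_neg nba, if_neg nca,
      h1st, h2nd, hdiag, Tac, Tcb, Tbc, Tba, Tca] <;>
    first
      | exact Z1 _
      | exact Z2 _ _
      | exact Z3 _ _
      | exact Z4 _ _
      | exact Z5 _ _
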